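/- For every complex number z with Re(z) ≤ 0, |e^z − 1| ≤ 1.682·|z|^{1/4}. -/

import Mathlib

open Complex Real

lemma exp_sub_one_le_abs (z : ℂ) (hz : z.re ≤ 0) :
    ‖Complex.exp z - 1‖ ≤ ‖z‖ := by
  have hr0 : 0 ≤ ‖z‖ := norm_nonneg z
  have h1 : Real.exp z.re ≤ 1 := Real.exp_le_one_iff.mpr hz
  have h2 : 1 - Real.exp z.re ≤ -z.re := by nlinarith [Real.add_one_le_exp z.re]
  have h3 : (0:ℝ) < Real.exp z.re := Real.exp_pos _
  have h4 : 1 - z.im ^ 2 / 2 ≤ Real.cos z.im := Real.one_sub_sq_div_two_le_cos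
  have h5 : Real.sin z.im ^ 2 + Real.cos z.im ^ 2 = 1 := Real.sin_sq_add_cos_sq _
  have key : ‖Complex.exp z - 1‖ ^ 2 ≤ ‖z‖ ^ 2 := by
    rw [Complex.sq_norm, Complex.sq_norm, Complex.normSq_apply, Complex.normSq_apply,
      Complex.sub_re, Complex.sub_im, Complex.exp_re, Complex.exp_im,
      Complex.one_re, Complex.one_im]
    nlinarith [sq_nonneg (Real.exp z.re - 1), sq_nonneg z.im, sq_nonneg z.re,
      sq_nonneg (Real.sin z.im)]
  exact le_of_pow_le_pow_left₀ (by norm_num) hr0 key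

lemma two_rpow_le : (2:ℝ) ^ ((3:ℝ)/4) ≤ 1.682 := by
  have h8 : ((2:ℝ) ^ ((3:ℝ)/4)) ^ (4:ℕ) = 8 := by
    rw [← Real.rpow_natCast ((2:ℝ) ^ ((3:ℝ)/4)) 4, ← Real.rpow_mul (by norm_num)]
    norm_num
  apply le_of_pow_le_pow_left₀ (n := 4) (by norm_num) (by norm_num)
  rw [h8]; norm_num

theorem exp_sub_one_bound (z : ℂ) (hz : z.re ≤ 0) :
    ‖Complex.exp z - 1‖ ≤ 1.682 * ‖z‖ ^ ((1 : ℝ) / 4) := by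
  set r := ‖z‖ with hr
  have hr0 : 0 ≤ r := norm_nonneg z
  rcases le_or_gt r 2 with hle | hgt
  · -- |e^z - 1| ≤ r ≤ 2^{3/4} r^{1/4} ≤ 1.682 r^{1/4}
    have h1 : ‖Complex.exp z - 1‖ ≤ r := exp_sub_one_le_abs z hz
    have h2 : r = r ^ ((3:ℝ)/4) * r ^ ((1:ℝ)/4) := by
      rw [← Real.rpow_add' hr0 (by norm_num)]
      norm_num
    have h3 : r ^ ((3:ℝ)/4) ≤ (2:ℝ) ^ ((3:ℝ)/4) :=
      Real.rpow_le_rpow hr0 hle (by norm_num)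
    have h4 : (0:ℝ) ≤ r ^ ((1:ℝ)/4) := Real.rpow_nonneg hr0 _
    calc ‖Complex.exp z - 1‖ ≤ r := h1
      _ = r ^ ((3:ℝ)/4) * r ^ ((1:ℝ)/4) := h2
      _ ≤ 1.682 * r ^ ((1:ℝ)/4) := by
          exact mul_le_mul_of_nonneg_right (h3.trans two_rpow_le) h4
  · have h1 : ‖Complex.exp z - 1‖ ≤ 2 := by
      have ht := norm_sub_le (Complex.exp z) 1
      simp only [norm_one] at ht
      have he : ‖Complex.exp z‖ ≤ 1 := by
        rw [Complex.norm_exp]; exact Real.exp_le_one_iff.mpr hz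
      linarith
    have h2 : (2:ℝ) = (2:ℝ) ^ ((3:ℝ)/4) * (2:ℝ) ^ ((1:ℝ)/4) := by
      rw [← Real.rpow_add (by norm_num)]; norm_num
    have h3 : (2:ℝ) ^ ((1:ℝ)/4) ≤ r ^ ((1:ℝ)/4) :=
      Real.rpow_le_rpow (by norm_num) hgt.le (by norm_num)
    calc ‖Complex.exp z - 1‖ ≤ 2 := h1
      _ = (2:ℝ) ^ ((3:ℝ)/4) * (2:ℝ) ^ ((1:ℝ)/4) := h2
      _ ≤ 1.682 * r ^ ((1:ℝ)/4) := by
          apply mul_le_mul two_rpow_le h3 (Real.rpow_nonneg (by norm_num) _) (by norm_num)
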